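/- Let m ≥ 3 be a natural number, let A be a nonempty finite set with a strict linear order <, let B be a weakly (m−1)-wise balanced design over A, and suppose |B| ≤ k·|A|^{1−ε} for some real k > 0 and 0 < ε < 1. Then (|A|^{ε}/k + |B|) / 2 ≤ α(Γ_{B,m}). -/

import Mathlib

open Finset

/-- `B` is a weakly `m`-wise balanced design over the finite set `A`:
every block is a nonempty subset of `A`, every point of `A` lies in at least
one block, and any `m` pairwise distinct points of `A` are contained together
in at most one block. -/
def IsWeaklyBalancedDesign {α : Type*} [DecidableEq α] (m : ℕ)
    (A : Finset α) (B : Finset (Finset α)) : Prop :=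
  (∀ C ∈ B, C ⊆ A) ∧
  (∀ C ∈ B, C.Nonempty) ∧
  (∀ x ∈ A, ∃ C ∈ B, x ∈ C) ∧
  (∀ S : Finset α, S ⊆ A → S.card = m → (B.filter fun C => S ⊆ C).card ≤ 1)

/-- The vertex set of `Γ_{B,m}`: all incidence pairs `(x, C)` with `x ∈ C ∈ B`. -/
def designVerts {α : Type*} [DecidableEq α] (B : Finset (Finset α)) :
    Finset (α × Finset α) :=
  B.biUnion fun C => C.image fun x => (x, C)

/-- The graph `Γ_{B,m}` on incidence pairs: `(x, C₁)` and `(y, C₂)` are adjacent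
iff `x < y`, `C₁ ≠ C₂` and `x ∈ C₂`, or symmetrically `y < x`, `C₂ ≠ C₁` and `y ∈ C₁`. -/
def designGraph {α : Type*} [inst : LinearOrder α] (B : Finset (Finset α)) :
    SimpleGraph (designVerts (α := α) B) where
  Adj u v :=
    (u.val.1 < v.val.1 ∧ u.val.2 ≠ v.val.2 ∧ u.val.1 ∈ v.val.2) ∨
    (v.val.1 < u.val.1 ∧ v.val.2 ≠ u.val.2 ∧ v.val.1 ∈ u.val.2)
  symm := ⟨fun u v h => by tauto⟩
  loopless := ⟨fun u h => by
    rcases h with ⟨h, _, _⟩ | ⟨h, _, _⟩ <;> exact lt_irrefl _ h⟩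

/-- The independence number of a graph: the largest size of an independent set of vertices. -/
noncomputable def indepNum {V : Type*} (G : SimpleGraph V) : ℕ :=
  sSup {n | ∃ s : Finset V, s.card = n ∧ ∀ x ∈ s, ∀ y ∈ s, ¬ G.Adj x y}

lemma mem_designVerts {α : Type*} [DecidableEq α] {B : Finset (Finset α)}
    {x : α} {C : Finset α} (hC : C ∈ B) (hx : x ∈ C) : (x, C) ∈ designVerts B := by
  simp only [designVerts, Finset.mem_biUnion, Finset.mem_image]
  exact ⟨C, hC, x, hx, rfl⟩

lemma le_indepNum {V : Type*} [Fintype V] (G : SimpleGraph V) (s : Finset V)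
    (hs : ∀ x ∈ s, ∀ y ∈ s, ¬ G.Adj x y) : s.card ≤ indepNum G := by
  apply le_csSup
  · refine ⟨Fintype.card V, ?_⟩
    rintro n ⟨t, rfl, -⟩
    exact Finset.card_le_univ t
  · exact ⟨s, rfl, hs⟩

/-- Let `m ≥ 3`, let `A` be a nonempty finite set with a strict linear order, let `B` be a
weakly `(m-1)`-wise balanced design over `A`, and suppose `|B| ≤ k·|A|^(1-ε)` for some real
`k > 0` and `0 < ε < 1`. Then `(|A|^ε/k + |B|)/2 ≤ α(Γ_{B,m})`. -/
theorem designGraph_indepNum_ge_of_few_blocks {α : Type*} [LinearOrder α] (m : ℕ)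
    (hm : 3 ≤ m) (A : Finset α) (hA : A.Nonempty) (B : Finset (Finset α))
    (hB : IsWeaklyBalancedDesign (m - 1) A B)
    (k ε : ℝ) (hk : 0 < k) (hε0 : 0 < ε) (hε1 : ε < 1)
    (hcard : (B.card : ℝ) ≤ k * (A.card : ℝ) ^ (1 - ε)) :
    ((A.card : ℝ) ^ ε / k + (B.card : ℝ)) / 2 ≤ (indepNum (designGraph B) : ℝ) := by
  classical
  obtain ⟨hsub, hne, hcov, -⟩ := hB
  obtain ⟨a, ha⟩ := hA.exists_mem
  obtain ⟨C₀, hC₀B, haC₀⟩ := hcov a ha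
  have hBne : B.Nonempty := ⟨C₀, hC₀B⟩
  obtain ⟨C, hCB, hCmax⟩ := B.exists_max_image Finset.card hBne
  -- covering bound
  have hAcov : A ⊆ B.biUnion id := fun x hx => by
    obtain ⟨C', hC', hxC'⟩ := hcov x hx
    exact Finset.mem_biUnion.2 ⟨C', hC', hxC'⟩
  have h1 : A.card ≤ B.card * C.card := by
    calc A.card ≤ (B.biUnion id).card := Finset.card_le_card hAcov
      _ ≤ ∑ D ∈ B, (id D).card := Finset.card_biUnion_le
      _ ≤ B.card * C.card := by
          simpa using Finset.sum_le_card_nsmul B _ C.card (fun D hD => hCmax D hD)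
  -- independent set of one vertex per block
  have h2 : B.card ≤ indepNum (designGraph B) := by
    have hinj : Function.Injective
        (fun D : {D // D ∈ B} =>
          (⟨((D.1.min' (hne D.1 D.2)), D.1), mem_designVerts D.2 (Finset.min'_mem _ _)⟩ :
            ↥(designVerts B))) := by
      intro D₁ D₂ h
      apply Subtype.ext
      exact congrArg (fun v : ↥(designVerts B) => v.1.2) h
    have hcard' : (B.attach.image (fun D : {D // D ∈ B} =>
          (⟨((D.1.min' (hne D.1 D.2)), D.1), mem_designVerts D.2 (Finset.min'_mem _ _)⟩ :
            ↥(designVerts B)))).card = B.card := by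
      rw [Finset.card_image_of_injective _ hinj, Finset.card_attach]
    rw [← hcard']
    apply le_indepNum
    intro x hx y hy hadj
    simp only [Finset.mem_image] at hx hy
    obtain ⟨D₁, -, rfl⟩ := hx
    obtain ⟨D₂, -, rfl⟩ := hy
    rcases (show _ ∨ _ from hadj) with ⟨hlt, -, hmem⟩ | ⟨hlt, -, hmem⟩
    · exact absurd (Finset.min'_le _ _ hmem) (not_le.2 hlt)
    · exact absurd (Finset.min'_le _ _ hmem) (not_le.2 hlt)
  -- independent set: all vertices in the largest block
  have h3 : C.card ≤ indepNum (designGraph B) := by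
    have hinj : Function.Injective
        (fun x : {x // x ∈ C} =>
          (⟨(x.1, C), mem_designVerts hCB x.2⟩ : ↥(designVerts B))) := by
      intro x₁ x₂ h
      apply Subtype.ext
      exact congrArg (fun v : ↥(designVerts B) => v.1.1) h
    have hcard' : (C.attach.image (fun x : {x // x ∈ C} =>
          (⟨(x.1, C), mem_designVerts hCB x.2⟩ : ↥(designVerts B)))).card = C.card := by
      rw [Finset.card_image_of_injective _ hinj, Finset.card_attach]
    rw [← hcard']
    apply le_indepNum
    intro x hx y hy hadj
    simp only [Finset.mem_image] at hx hy
    obtain ⟨x₁, -, rfl⟩ := hx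
    obtain ⟨x₂, -, rfl⟩ := hy
    rcases (show _ ∨ _ from hadj) with ⟨-, hne', -⟩ | ⟨-, hne', -⟩ <;> exact hne' rfl
  -- real arithmetic
  have hApos : (0:ℝ) < A.card := by exact_mod_cast Finset.card_pos.2 ⟨a, ha⟩
  have hp : (0:ℝ) < (A.card:ℝ) ^ (1 - ε) := Real.rpow_pos_of_pos hApos _
  have hsplit : (A.card:ℝ) = (A.card:ℝ) ^ (1-ε) * (A.card:ℝ) ^ ε := by
    rw [← Real.rpow_add hApos, sub_add_cancel, Real.rpow_one]
  have hc0 : (0:ℝ) ≤ C.card := Nat.cast_nonneg _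
  have h1' : (A.card:ℝ) ≤ (B.card:ℝ) * (C.card:ℝ) := by exact_mod_cast h1
  have h4 : (B.card:ℝ) * C.card ≤ k * (A.card:ℝ)^(1-ε) * C.card :=
    mul_le_mul_of_nonneg_right hcard hc0
  have h5 : (A.card:ℝ)^(1-ε) * (A.card:ℝ)^ε ≤ (A.card:ℝ)^(1-ε) * (k * C.card) := by
    nlinarith [h1', h4, hsplit]
  have h6 : (A.card:ℝ)^ε ≤ k * C.card := le_of_mul_le_mul_left h5 hp
  have h7 : (A.card:ℝ)^ε / k ≤ C.card := (div_le_iff₀ hk).2 (by linarith)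
  have h2' : (B.card:ℝ) ≤ (indepNum (designGraph B) : ℝ) := by exact_mod_cast h2
  have h3' : (C.card:ℝ) ≤ (indepNum (designGraph B) : ℝ) := by exact_mod_cast h3
  linarith
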